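/- arXiv:1311.4804 — 2 statements merged into one kernel-verified Lean document; each statement's English description precedes it below -/
import Mathlib

section
/- Let D be a non-crossing diagram of Dynkin type D_n and r_D the replacement map (which replaces a coloured diameter by a coloured pair of radii through the centre c unless the diameter of the other colour on the same pair of endpoints also lies in D, and is the identity on pairs of arcs and when D has no diameters). If both r_D-images of two elements of D are given by endpoint pairs (a,b) and (x,y) (with possibly b or y equal to the centre c), then the corresponding arcs or radii do not cross. -/
open scoped Classical

namespace DynkinD

/-- Vertices of the regular `2n`-gon, labelled by `ZMod (2*n)`. -/
abbrev Vtx (n : ℕ) := ZMod (2 * n)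

/-- The element `n` of `ZMod (2*n)`, i.e. rotation by π. -/
def dN (n : ℕ) : Vtx n := (n : ZMod (2 * n))

/-- `x` lies strictly between `a` and `b` in anticlockwise order. -/
def btw (n : ℕ) (a x b : Vtx n) : Prop :=
  0 < (x - a).val ∧ (x - a).val < (b - a).val

/-- The arcs `(i,j)` and `(k,l)` cross: the four vertices are pairwise distinct and
appear in anticlockwise cyclic order `i,k,j,l` or `k,i,l,j`. -/
def crosses (n : ℕ) (i j k l : Vtx n) : Prop :=
  (i ≠ j ∧ i ≠ k ∧ i ≠ l ∧ j ≠ k ∧ j ≠ l ∧ k ≠ l) ∧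
  ((btw n i k j ∧ btw n j l i) ∨ (btw n k i l ∧ btw n l j k))

/-- Elements of the combinatorial model: pairs of arcs, coloured diameters,
and coloured pairs of radii (through the centre). -/
inductive RElt (n : ℕ) where
  | pairArc (i j : Vtx n)
  | diam (i : Vtx n) (c : Bool)
  | radii (i : Vtx n) (c : Bool)

def isRadii {n : ℕ} : RElt n → Prop
  | .radii _ _ => True
  | _ => False

/-- Crossing of elements (colour-aware: diameters of the same colour never cross;
a pair of radii crosses another element iff the corresponding diameter does;
two pairs of radii never cross). -/
def crossElt (n : ℕ) : RElt n → RElt n → Prop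
  | .pairArc i j, .pairArc k l => crosses n i j k l ∨ crosses n i j (k + dN n) (l + dN n)
  | .pairArc i j, .diam k _ => crosses n i j k (k + dN n)
  | .diam k _, .pairArc i j => crosses n i j k (k + dN n)
  | .diam i c, .diam j c' => c ≠ c' ∧ crosses n i (i + dN n) j (j + dN n)
  | .radii i _, .pairArc k l => crosses n k l i (i + dN n)
  | .pairArc k l, .radii i _ => crosses n k l i (i + dN n)
  | .radii i c, .diam j c' => c ≠ c' ∧ crosses n i (i + dN n) j (j + dN n)
  | .diam j c', .radii i c => c ≠ c' ∧ crosses n i (i + dN n) j (j + dN n)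
  | .radii _ _, .radii _ _ => False

/-- Crossing exactly once. -/
def crossOnceElt (n : ℕ) : RElt n → RElt n → Prop
  | .pairArc i j, .pairArc k l => Xor' (crosses n i j k l) (crosses n i j (k + dN n) (l + dN n))
  | x, y => crossElt n x y

/-- Plain (colour-blind) geometric crossing of the underlying segments. -/
def geomCross (n : ℕ) : RElt n → RElt n → Prop
  | .pairArc i j, .pairArc k l => crosses n i j k l ∨ crosses n i j (k + dN n) (l + dN n)
  | .pairArc i j, .diam k _ => crosses n i j k (k + dN n)
  | .diam k _, .pairArc i j => crosses n i j k (k + dN n)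
  | .diam i _, .diam j _ => crosses n i (i + dN n) j (j + dN n)
  | .radii i _, .pairArc k l => crosses n k l i (i + dN n)
  | .pairArc k l, .radii i _ => crosses n k l i (i + dN n)
  | .radii i _, .diam j _ => crosses n i (i + dN n) j (j + dN n)
  | .diam j _, .radii i _ => crosses n i (i + dN n) j (j + dN n)
  | .radii _ _, .radii _ _ => False

/-- Identification of representatives of one pair of arcs / coloured diameter / pair of radii. -/
def symEq (n : ℕ) : RElt n → RElt n → Prop
  | .pairArc i j, .pairArc k l =>
      (k = i ∧ l = j) ∨ (k = j ∧ l = i) ∨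
      (k = i + dN n ∧ l = j + dN n) ∨ (k = j + dN n ∧ l = i + dN n)
  | .diam i c, .diam j c' => c = c' ∧ (j = i ∨ j = i + dN n)
  | .radii i c, .radii j c' => c = c' ∧ (j = i ∨ j = i + dN n)
  | _, _ => False

/-- Elements allowed in a diagram of Dynkin type `D_n`: no radii, and pairs of
arcs must be internal non-diameter arcs (no edges, no degenerate arcs). -/
def IsProper {n : ℕ} : RElt n → Prop
  | .pairArc i j => i ≠ j ∧ j ≠ i + dN n ∧ j ≠ i + 1 ∧ i ≠ j + 1
  | .diam _ _ => True
  | .radii _ _ => False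

/-- Closure under the symmetries identifying representatives. -/
def SymClosed {n : ℕ} (D : Set (RElt n)) : Prop :=
  (∀ i j, RElt.pairArc i j ∈ D →
    RElt.pairArc j i ∈ D ∧ RElt.pairArc (i + dN n) (j + dN n) ∈ D) ∧
  (∀ i c, RElt.diam i c ∈ D → RElt.diam (i + dN n) c ∈ D)

/-- A diagram of Dynkin type `D_n`. -/
def IsDiagram {n : ℕ} (D : Set (RElt n)) : Prop :=
  (∀ e ∈ D, IsProper e) ∧ SymClosed D

/-- A non-crossing collection. -/
def NonCrossing {n : ℕ} (D : Set (RElt n)) : Prop :=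
  ∀ e ∈ D, ∀ f ∈ D, ¬ crossElt n e f

/-- `nc D` : the elements of `A(P_{2n})` crossing no element of `D`. -/
def ncD (n : ℕ) (D : Set (RElt n)) : Set (RElt n) :=
  {e | IsProper e ∧ ∀ f ∈ D, ¬ crossElt n e f}

def HasDiam {n : ℕ} (D : Set (RElt n)) : Prop := ∃ i c, RElt.diam i c ∈ D

/-- The replacement map `r_D`: the identity if `D` has no diameters; otherwise it
replaces a coloured diameter by the correspondingly coloured pair of radii, unless
the oppositely coloured diameter with the same endpoints also lies in `D`. -/
noncomputable def rD {n : ℕ} (D : Set (RElt n)) (x : RElt n) : RElt n :=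
  if ¬ HasDiam D then x
  else match x with
    | .diam i c =>
        if RElt.diam i (!c) ∈ D ∨ RElt.diam (i + dN n) (!c) ∈ D then .diam i c
        else .radii i c
    | y => y

/-- Vertices of the `2n`-gon together with the central vertex `c` (`none`). -/
abbrev V (n : ℕ) := Option (Vtx n)

/-- Rotation by π (fixing the centre). -/
def rot (n : ℕ) : V n → V n := Option.map (· + dN n)

/-- Position of a vertex in the plane (the centre at the origin). -/
noncomputable def pos (n : ℕ) : V n → ℂ
  | none => 0
  | some k => Complex.exp (2 * Real.pi * Complex.I * (k.val : ℂ) / (2 * n))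

/-- The clockwise angle `∠(x,y,z) ∈ [0,2π)` covered when rotating the segment
`(x,y)` to the segment `(y,z)` clockwise about `y`. -/
noncomputable def ang (n : ℕ) (x y z : V n) : ℝ :=
  let a := Complex.arg ((pos n x - pos n y) / (pos n z - pos n y))
  if 0 ≤ a then a else a + 2 * Real.pi

/-- The unordered segments underlying an element (both π-rotated copies). -/
def segs (n : ℕ) : RElt n → Set (Sym2 (V n))
  | .pairArc i j => {s(some i, some j), s(some (i + dN n), some (j + dN n))}
  | .diam i _ => {s(some i, some (i + dN n))}
  | .radii i _ => {s(some i, none), s(some (i + dN n), none)}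

/-- A `D`-cell of Dynkin type `D_n`: a polygon `⟨d_1,…,d_k⟩`, `k ≥ 3`, with
pairwise distinct vertices in `{0,…,2n-1} ∪ {c}`, whose sides underlie elements
of `r_D(D)` or edges of the `2n`-gon, satisfying the angle-minimality condition. -/
structure Cell (n : ℕ) (D : Set (RElt n)) where
  k : ℕ
  hk : 3 ≤ k
  d : ZMod k → V n
  inj : Function.Injective d
  sides : ∀ i : ZMod k,
    (∃ e ∈ D, s(d i, d (i + 1)) ∈ segs n (rD D e)) ∨
    (∃ j : Vtx n, s(d i, d (i + 1)) = s(some j, some (j + 1)))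
  minAngle : ∀ (i : ZMod k) (v : V n), (∃ e ∈ D, s(d i, v) ∈ segs n (rD D e)) →
    0 < ang n (d (i - 1)) (d i) v →
    0 < ang n (d (i - 1)) (d i) (d (i + 1)) ∧
      ang n (d (i - 1)) (d i) (d (i + 1)) ≤ ang n (d (i - 1)) (d i) v

/-- `e` is contained in (the pair of `D`-cells of) `C`: `r_D(e)` is a diagonal. -/
def containedIn {n : ℕ} {D : Set (RElt n)} (C : Cell n D) (e : RElt n) : Prop :=
  ∃ i j : ZMod C.k, j ≠ i - 1 ∧ j ≠ i ∧ j ≠ i + 1 ∧ s(C.d i, C.d j) ∈ segs n (rD D e)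

/-- Two cells determine the same pair of `D`-cells. -/
def SamePair {n : ℕ} {D : Set (RElt n)} (C C' : Cell n D) : Prop :=
  Set.range C'.d = Set.range C.d ∨ Set.range C'.d = rot n '' Set.range C.d

/-- A π-rotation-invariant cell. -/
def RotInv {n : ℕ} {D : Set (RElt n)} (C : Cell n D) : Prop :=
  Set.range C.d = rot n '' Set.range C.d

/-- The segment from `u` to `v` is a diameter. -/
def isDiamSeg (n : ℕ) (u v : V n) : Prop := ∃ a : Vtx n, u = some a ∧ v = some (a + dN n)

/-- The colour rules for mutation: whenever the mutated element `e'` is a coloured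
diameter, its colour is prescribed according to the diameters of `D`. -/
def colourRule (n : ℕ) (D : Set (RElt n)) (e e' : RElt n) : Prop :=
  ∀ (i : Vtx n) (c' : Bool), e' = RElt.diam i c' →
    ((¬ HasDiam D → ∃ j c, e = RElt.diam j c ∧ c' = !c) ∧
     ((∃ x y cx cy, RElt.diam x cx ∈ D ∧ RElt.diam y cy ∈ D ∧ y ≠ x ∧ y ≠ x + dN n) →
        ∀ cγ : Bool, (∃ z, RElt.diam z cγ ∈ D) → c' = cγ) ∧
     (∀ (x : Vtx n) (cγ : Bool), RElt.diam x cγ ∈ D →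
        (∀ z cz, RElt.diam z cz ∈ D → (z = x ∨ z = x + dN n) ∧ cz = cγ) →
        (c' = !cγ ↔ (i = x ∨ i = x + dN n))))

/-- The mutation `μ_D` as a relation: `D` is fixed pointwise, and an element not in `D`,
contained in a pair of `D`-cells with `r_D`-image the diagonal `(d_i,d_j)`, is sent to
the element with `r_D`-image `(d_{i+1},d_{j+1})`, colours as prescribed. -/
def MutStep (n : ℕ) (D : Set (RElt n)) (e e' : RElt n) : Prop :=
  (e ∈ D ∧ e' = e) ∨
  (e ∉ D ∧ ¬ isRadii e' ∧ ∃ (C : Cell n D) (i j : ZMod C.k),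
    j ≠ i - 1 ∧ j ≠ i ∧ j ≠ i + 1 ∧
    s(C.d i, C.d j) ∈ segs n (rD D e) ∧
    s(C.d (i + 1), C.d (j + 1)) ∈ segs n (rD D e') ∧
    colourRule n D e e')

/-- The mutation `μ_D^-` as a relation (rotating diagonals clockwise). -/
def MutStepInv (n : ℕ) (D : Set (RElt n)) (e e' : RElt n) : Prop :=
  (e ∈ D ∧ e' = e) ∨
  (e ∉ D ∧ ¬ isRadii e' ∧ ∃ (C : Cell n D) (i j : ZMod C.k),
    j ≠ i - 1 ∧ j ≠ i ∧ j ≠ i + 1 ∧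
    s(C.d i, C.d j) ∈ segs n (rD D e) ∧
    s(C.d (i - 1), C.d (j - 1)) ∈ segs n (rD D e') ∧
    colourRule n D e e')

end DynkinD

open DynkinD in
/-- The `r_D`-images of two elements of a non-crossing diagram `D` do not cross
(as plain arcs or radii). -/
theorem stmt_4 (n : ℕ) (hn : 4 ≤ n) (D : Set (RElt n))
    (hD : IsDiagram D) (hnc : NonCrossing D)
    (e f : RElt n) (he : e ∈ D) (hf : f ∈ D) :
    ¬ geomCross n (rD D e) (rD D f) := by
  obtain ⟨hprop, hsymA, hsymD⟩ := hD
  have hdd : ∀ i : Vtx n, i + dN n + dN n = i := by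
    intro i
    have h0 : (dN n + dN n : Vtx n) = 0 := by
      have h2 : ((2 * n : ℕ) : ZMod (2 * n)) = 0 := ZMod.natCast_self _
      simpa [dN, two_mul] using h2
    rw [add_assoc, h0, add_zero]
  have hboth : ∀ (i : Vtx n) (c : Bool),
      (RElt.diam i (!c) ∈ D ∨ RElt.diam (i + dN n) (!c) ∈ D) →
      RElt.diam i (!c) ∈ D := by
    intro i c h
    rcases h with h | h
    · exact h
    · have h' := hsymD _ _ h
      rwa [hdd] at h'
  have rArc : ∀ i j : Vtx n, rD D (RElt.pairArc i j) = RElt.pairArc i j := by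
    intro i j; unfold rD; split <;> rfl
  have rDiam : ∀ (i : Vtx n) (c : Bool), HasDiam D →
      rD D (RElt.diam i c) =
        (if RElt.diam i (!c) ∈ D ∨ RElt.diam (i + dN n) (!c) ∈ D
          then RElt.diam i c else RElt.radii i c) := by
    intro i c h; unfold rD; rw [if_neg (not_not_intro h)]
  cases e with
  | radii i c => exact absurd (hprop _ he) (by simp [IsProper])
  | pairArc i j =>
    cases f with
    | radii k c => exact absurd (hprop _ hf) (by simp [IsProper])
    | pairArc k l =>
      rw [rArc, rArc]
      exact hnc _ he _ hf
    | diam k c =>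
      have hd : HasDiam D := ⟨k, c, hf⟩
      rw [rArc, rDiam k c hd]
      split_ifs with h1
      · exact hnc _ he _ hf
      · exact hnc _ he _ hf
  | diam i c =>
    have hd : HasDiam D := ⟨i, c, he⟩
    cases f with
    | radii k c' => exact absurd (hprop _ hf) (by simp [IsProper])
    | pairArc k l =>
      rw [rArc, rDiam i c hd]
      split_ifs with h1
      · exact hnc _ he _ hf
      · exact hnc _ he _ hf
    | diam j c' =>
      rw [rDiam i c hd, rDiam j c' hd]
      split_ifs with h1 h2 h2
      · by_cases hcc : c = c'
        · subst hcc
          intro hcr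
          exact hnc _ (hboth i c h1) _ hf ⟨Bool.not_ne_self c, hcr⟩
        · intro hcr
          exact hnc _ he _ hf ⟨hcc, hcr⟩
      · by_cases hcc : c' = c
        · subst hcc
          intro hcr
          exact hnc _ hf _ (hboth i c' h1) ⟨Ne.symm (Bool.not_ne_self c'), hcr⟩
        · intro hcr
          exact hnc _ hf _ he ⟨hcc, hcr⟩
      · by_cases hcc : c = c'
        · subst hcc
          intro hcr
          exact hnc _ he _ (hboth j c h2) ⟨Ne.symm (Bool.not_ne_self c), hcr⟩
        · intro hcr
          exact hnc _ he _ hf ⟨hcc, hcr⟩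
      · exact fun h => h
end

section
/- Mutation changes the colour of diameters: if D is a non-crossing diagram of Dynkin type D_n, (a,b) is a coloured diameter in nc D \ D, and μ_D^-((a,b)) (respectively μ_D((a,b))) is again a diameter, then it has the opposite colour to (a,b). -/
open scoped Classical

namespace DynkinD

lemma dN_add_dN {n : ℕ} : dN n + dN n = 0 := by
  have h : ((n : ℕ) + n : ℕ) = 2 * n := by ring
  rw [dN, ← Nat.cast_add, h, ZMod.natCast_self]

lemma add_dN_add_dN {n : ℕ} (x : Vtx n) : x + dN n + dN n = x := by
  rw [add_assoc, dN_add_dN, add_zero]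

lemma dN_val {n : ℕ} (hn : 0 < n) : (dN n).val = n := by
  haveI : NeZero (2 * n) := ⟨by omega⟩
  have h : n < 2 * n := by omega
  simpa [dN] using ZMod.val_natCast_of_lt h

lemma neg_dN {n : ℕ} : -dN n = dN n := neg_eq_of_add_eq_zero_left dN_add_dN

lemma ne_add_dN {n : ℕ} (hn : 0 < n) (x : Vtx n) : x ≠ x + dN n := by
  haveI : NeZero (2 * n) := ⟨by omega⟩
  intro h
  have h0 : dN n = 0 := (left_eq_add.mp h)
  have := dN_val (n := n) hn
  rw [h0] at this
  simp [ZMod.val_zero] at this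
  omega

lemma diam_cross {n : ℕ} (hn : 0 < n) {a b : Vtx n} (h1 : b ≠ a) (h2 : b ≠ a + dN n) :
    crosses n a (a + dN n) b (b + dN n) := by
  haveI : NeZero (2 * n) := ⟨by omega⟩
  have hval : (dN n).val = n := dN_val hn
  have hba : b - a ≠ 0 := sub_ne_zero.mpr h1
  haveI : NeZero (b - a) := ⟨hba⟩
  set t := (b - a).val with ht
  have ht0 : 0 < t := by
    rcases Nat.eq_zero_or_pos t with h | h
    · exact absurd ((ZMod.val_eq_zero _).mp h) hba
    · exact h
  have htlt : t < 2 * n := ZMod.val_lt _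
  have htn : t ≠ n := by
    intro h
    apply h2
    have : b - a = dN n := ZMod.val_injective _ (by rw [← ht, h, hval])
    have := sub_eq_iff_eq_add.mp this
    rw [this, add_comm]
  have e1 : a + dN n - a = dN n := by ring
  have e2 : b + dN n - (a + dN n) = b - a := by ring
  have e3 : (a - (a + dN n)).val = n := by
    have h' : a - (a + dN n) = -(dN n) := by ring
    rw [h', neg_dN, hval]
  have e4 : (a - b).val = 2 * n - t := by
    have h' : a - b = -(b - a) := by ring
    rw [h', ZMod.val_neg_of_ne_zero]
  have e5 : (b + dN n - b).val = n := by
    have h' : b + dN n - b = dN n := by ring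
    rw [h', hval]
  have e6 : (a + dN n - (b + dN n)).val = 2 * n - t := by
    have h' : a + dN n - (b + dN n) = -(b - a) := by ring
    rw [h', ZMod.val_neg_of_ne_zero]
  have e7 : (b - (b + dN n)).val = n := by
    have h' : b - (b + dN n) = -(dN n) := by ring
    rw [h', neg_dN, hval]
  refine ⟨⟨ne_add_dN hn a, h1.symm, ?_, Ne.symm h2, ?_, ne_add_dN hn b⟩, ?_⟩
  · intro h
    exact h2 (by rw [h, add_dN_add_dN])
  · intro h
    exact h1 (add_right_cancel h).symm
  · rcases Nat.lt_or_ge t n with hlt | hge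
    · left
      refine ⟨⟨ht0, ?_⟩, ⟨?_, ?_⟩⟩
      · rw [e1, hval]; exact hlt
      · rw [e2]; exact ht0
      · rw [e2, e3]; exact hlt
    · have hgt : n < t := lt_of_le_of_ne hge (Ne.symm htn)
      right
      refine ⟨⟨?_, ?_⟩, ⟨?_, ?_⟩⟩
      · rw [e4]; omega
      · rw [e4, e5]; omega
      · rw [e6]; omega
      · rw [e6, e7]; omega

lemma zmod_succ_ne {k : ℕ} (hk : 3 ≤ k) (x : ZMod k) : x ≠ x + 1 := by
  haveI : Fact (1 < k) := ⟨by omega⟩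
  intro h
  exact one_ne_zero (left_eq_add.mp h)

lemma zmod_pred_ne {k : ℕ} (hk : 3 ≤ k) (x : ZMod k) : x ≠ x - 1 := by
  haveI : Fact (1 < k) := ⟨by omega⟩
  intro h
  have h' : x = x + 1 := sub_eq_iff_eq_add.mp h.symm
  exact one_ne_zero (left_eq_add.mp h')

lemma rD_diam_eq {n : ℕ} {D : Set (RElt n)} (h : HasDiam D) {i : Vtx n} {c : Bool}
    (hc : RElt.diam i (!c) ∈ D ∨ RElt.diam (i + dN n) (!c) ∈ D) :
    rD D (RElt.diam i c) = RElt.diam i c := by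
  simp only [rD, not_not, h, not_true, if_false]
  rw [if_pos hc]

lemma rD_diam_radii {n : ℕ} {D : Set (RElt n)} (h : HasDiam D) {i : Vtx n} {c : Bool}
    (hc : ¬(RElt.diam i (!c) ∈ D ∨ RElt.diam (i + dN n) (!c) ∈ D)) :
    rD D (RElt.diam i c) = RElt.radii i c := by
  simp only [rD, not_not, h, not_true, if_false]
  rw [if_neg hc]

end DynkinD

open DynkinD in
/-- Mutation changes the colour of diameters: if a coloured diameter of `nc D \ D` is
mutated (by `μ_D` or `μ_D^-`) to a diameter, the result has the opposite colour. -/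
theorem stmt_11 (n : ℕ) (hn : 4 ≤ n) (D : Set (RElt n))
    (hD : IsDiagram D) (hnc : NonCrossing D)
    (a a' : Vtx n) (c c' : Bool)
    (hmem : RElt.diam a c ∈ ncD n D) (hnot : RElt.diam a c ∉ D)
    (hmut : MutStep n D (RElt.diam a c) (RElt.diam a' c') ∨
            MutStepInv n D (RElt.diam a c) (RElt.diam a' c')) :
    c' = !c := by
  have hn0 : 0 < n := by omega
  have hsym : ∀ i cz, RElt.diam i cz ∈ D → RElt.diam (i + dN n) cz ∈ D := hD.2.2
  -- Extract colour rule and four pairwise distinct segment endpoints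
  obtain ⟨hcol, u, v, u', v', huu', huv', hvu', hvv', hsu, hsu'⟩ :
      colourRule n D (RElt.diam a c) (RElt.diam a' c') ∧
      ∃ u v u' v' : V n, u ≠ u' ∧ u ≠ v' ∧ v ≠ u' ∧ v ≠ v' ∧
        s(u, v) ∈ segs n (rD D (RElt.diam a c)) ∧
        s(u', v') ∈ segs n (rD D (RElt.diam a' c')) := by
    rcases hmut with h | h <;>
      rcases h with ⟨hin, _⟩ | ⟨_, _, C, i, j, h1, h2, h3, hs, hs', hcolr⟩
    · exact absurd hin hnot
    · refine ⟨hcolr, C.d i, C.d j, C.d (i + 1), C.d (j + 1), ?_, ?_, ?_, ?_, hs, hs'⟩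
      · exact fun h => zmod_succ_ne C.hk i (C.inj h)
      · refine fun h => h1 ?_
        have := C.inj h
        rw [this]; ring
      · exact fun h => h3 (C.inj h)
      · exact fun h => zmod_succ_ne C.hk j (C.inj h)
    · exact absurd hin hnot
    · refine ⟨hcolr, C.d i, C.d j, C.d (i - 1), C.d (j - 1), ?_, ?_, ?_, ?_, hs, hs'⟩
      · exact fun h => zmod_pred_ne C.hk i (C.inj h)
      · refine fun h => h3 ?_
        have := C.inj h
        rw [this]; ring
      · exact fun h => h1 (C.inj h)
      · exact fun h => zmod_pred_ne C.hk j (C.inj h)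
  by_cases hHas : HasDiam D
  · -- D contains a diameter
    have claimA : ∀ z cz, RElt.diam z cz ∈ D → z ≠ a → z ≠ a + dN n → cz = c := by
      intro z cz hz hz1 hz2
      by_contra hne
      exact hmem.2 _ hz ⟨fun h => hne h.symm, diam_cross hn0 hz1 hz2⟩
    have claimB : ∀ cz, (RElt.diam a cz ∈ D ∨ RElt.diam (a + dN n) cz ∈ D) → cz = !c := by
      intro cz h
      have ha : RElt.diam a cz ∈ D := by
        rcases h with h | h
        · exact h
        · have := hsym _ _ h
          rwa [add_dN_add_dN] at this
      have hne : cz ≠ c := fun h => hnot (h ▸ ha)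
      exact Bool.eq_not_iff.mpr hne
    by_cases hex : ∃ z cz, RElt.diam z cz ∈ D ∧ z ≠ a ∧ z ≠ a + dN n
    · -- Branch 1: D has a diameter away from position a
      obtain ⟨z, cz, hz, hz1, hz2⟩ := hex
      have hcz : cz = c := claimA z cz hz hz1 hz2
      subst hcz
      have hna : RElt.diam a (!cz) ∉ D := by
        intro h
        exact hnc _ h _ hz ⟨by simp, diam_cross hn0 hz1 hz2⟩
      have hna' : RElt.diam (a + dN n) (!cz) ∉ D := by
        intro h
        have := hsym _ _ h
        rw [add_dN_add_dN] at this
        exact hna this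
      have hre : rD D (RElt.diam a cz) = RElt.radii a cz :=
        rD_diam_radii hHas (by push_neg; exact ⟨hna, hna'⟩)
      rw [hre] at hsu
      simp only [segs, Set.mem_insert_iff, Set.mem_singleton_iff, Sym2.eq_iff] at hsu
      by_cases hcond : RElt.diam a' (!c') ∈ D ∨ RElt.diam (a' + dN n) (!c') ∈ D
      · have ha'D : RElt.diam a' (!c') ∈ D := by
          rcases hcond with h | h
          · exact h
          · have := hsym _ _ h
            rwa [add_dN_add_dN] at this
        have hre' : rD D (RElt.diam a' c') = RElt.diam a' c' := rD_diam_eq hHas hcond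
        rw [hre'] at hsu'
        simp only [segs, Set.mem_singleton_iff, Sym2.eq_iff] at hsu'
        by_cases ha' : a' = a ∨ a' = a + dN n
        · exfalso
          rcases ha' with h | h <;> subst h <;>
            (try simp only [add_dN_add_dN] at hsu') <;>
            rcases hsu with (⟨hA, hB⟩ | ⟨hA, hB⟩) | (⟨hA, hB⟩ | ⟨hA, hB⟩) <;>
            rcases hsu' with ⟨hC, hE⟩ | ⟨hC, hE⟩ <;>
            first
            | exact huu' (hA.trans hC.symm)
            | exact huv' (hA.trans hE.symm)
            | exact hvu' (hB.trans hC.symm)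
            | exact hvv' (hB.trans hE.symm)
        · push_neg at ha'
          have h1 : (!c') = cz := claimA a' (!c') ha'D ha'.1 ha'.2
          rw [← h1, Bool.not_not]
      · have hre' : rD D (RElt.diam a' c') = RElt.radii a' c' := rD_diam_radii hHas hcond
        rw [hre'] at hsu'
        simp only [segs, Set.mem_insert_iff, Set.mem_singleton_iff, Sym2.eq_iff] at hsu'
        exfalso
        rcases hsu with (⟨hA, hB⟩ | ⟨hA, hB⟩) | (⟨hA, hB⟩ | ⟨hA, hB⟩) <;>
          rcases hsu' with (⟨hC, hE⟩ | ⟨hC, hE⟩) | (⟨hC, hE⟩ | ⟨hC, hE⟩) <;>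
          first
          | exact huu' (hA.trans hC.symm)
          | exact huv' (hA.trans hE.symm)
          | exact hvu' (hB.trans hC.symm)
          | exact hvv' (hB.trans hE.symm)
    · -- Branch 2: all diameters of D at position a (or a + n)
      push_neg at hex
      obtain ⟨x, cγ, hx⟩ := hHas
      have hxa : x = a ∨ x = a + dN n := by
        rcases eq_or_ne x a with h | h
        · exact Or.inl h
        · exact Or.inr (hex x cγ hx h)
      have hcγ : cγ = !c := by
        apply claimB
        rcases hxa with h | h
        · exact Or.inl (h ▸ hx)
        · exact Or.inr (h ▸ hx)
      subst hcγ
      have haD : RElt.diam a (!c) ∈ D := by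
        rcases hxa with h | h
        · exact h ▸ hx
        · have := hsym _ _ (h ▸ hx)
          rwa [add_dN_add_dN] at this
      have haD' : RElt.diam (a + dN n) (!c) ∈ D := hsym _ _ haD
      have hrule := ((hcol a' c' rfl).2.2 a (!c) haD ?ruleaux)
      case ruleaux =>
        intro z cz hz
        have hz' : z = a ∨ z = a + dN n := by
          rcases eq_or_ne z a with h | h
          · exact Or.inl h
          · exact Or.inr (hex z cz hz h)
        refine ⟨hz', claimB cz ?_⟩
        rcases hz' with h | h
        · exact Or.inl (h ▸ hz)
        · exact Or.inr (h ▸ hz)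
      rw [Bool.not_not] at hrule
      by_cases ha' : a' = a ∨ a' = a + dN n
      · exfalso
        have hc' : c' = c := hrule.2 ha'
        have ha'D : RElt.diam a' (!c') ∈ D := by
          rw [hc']
          rcases ha' with h | h
          · exact h ▸ haD
          · exact h ▸ haD'
        have hre : rD D (RElt.diam a c) = RElt.diam a c :=
          rD_diam_eq ⟨_, _, haD⟩ (Or.inl haD)
        have hre' : rD D (RElt.diam a' c') = RElt.diam a' c' :=
          rD_diam_eq ⟨_, _, haD⟩ (Or.inl ha'D)
        rw [hre] at hsu
        rw [hre'] at hsu'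
        simp only [segs, Set.mem_singleton_iff, Sym2.eq_iff] at hsu hsu'
        rcases ha' with h | h <;> subst h <;>
          (try simp only [add_dN_add_dN] at hsu') <;>
          rcases hsu with ⟨hA, hB⟩ | ⟨hA, hB⟩ <;>
          rcases hsu' with ⟨hC, hE⟩ | ⟨hC, hE⟩ <;>
          first
          | exact huu' (hA.trans hC.symm)
          | exact huv' (hA.trans hE.symm)
          | exact hvu' (hB.trans hC.symm)
          | exact hvv' (hB.trans hE.symm)
      · have : ¬ (c' = c) := fun h => ha' (hrule.1 h)
        exact Bool.eq_not_iff.mpr this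
  · -- D has no diameters
    obtain ⟨j, c0, hj, hc⟩ := (hcol a' c' rfl).1 hHas
    injection hj with h1 h2
    rw [hc, h2]
end
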